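/- The following two statements are equivalent: (i) f(n,a) = f(n+1,a) for all positive integers a and n with n ≥ ⌈log₂ a⌉ + 1; (ii) g(n',m) = g(n'+1,m) for all positive integers m and n' with m ≥ 2 and n' ≥ ⌈log₂ m⌉. -/

import Mathlib

open Finset

/-- A family of sets is union-closed if it contains the union of any two of its sets. -/
def UnionClosed (F : Finset (Finset ℕ)) : Prop :=
  ∀ S ∈ F, ∀ T ∈ F, S ∪ T ∈ F

/-- `F` is a family of subsets of `[n] = {0, …, n-1}` (modeled as `Finset.range n`). -/
def FamilyOn (n : ℕ) (F : Finset (Finset ℕ)) : Prop :=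
  ∀ S ∈ F, S ⊆ Finset.range n

/-- The degree of an element `e`: the number of sets of `F` containing `e`. -/
def degOf (F : Finset (Finset ℕ)) (e : ℕ) : ℕ :=
  (F.filter (fun S => e ∈ S)).card

/-- `franklF n a` is the maximum cardinality of a nonempty union-closed family of subsets
of `[n]` in which every element of `[n]` belongs to at most `a` sets. -/
noncomputable def franklF (n a : ℕ) : ℕ :=
  sSup {m | ∃ F : Finset (Finset ℕ), UnionClosed F ∧ FamilyOn n F ∧ F.Nonempty ∧
    (∀ e ∈ Finset.range n, degOf F e ≤ a) ∧ F.card = m}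

/-- `franklG n m` is the minimum, over union-closed families of subsets of `[n]` with
exactly `m` sets, of the maximum degree `max_{e ∈ [n]} |{S ∈ F : e ∈ S}|`. -/
noncomputable def franklG (n m : ℕ) : ℕ :=
  sInf {a | ∃ F : Finset (Finset ℕ), UnionClosed F ∧ FamilyOn n F ∧ F.card = m ∧
    (Finset.range n).sup (degOf F) = a}

/- ### basic lemmas -/

lemma degOf_mono {F G : Finset (Finset ℕ)} (h : F ⊆ G) (e : ℕ) : degOf F e ≤ degOf G e :=
  Finset.card_le_card (Finset.filter_subset_filter _ h)

lemma degOf_eq_zero {n : ℕ} {F : Finset (Finset ℕ)} (hF : FamilyOn n F) {e : ℕ} (he : n ≤ e) :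
    degOf F e = 0 := by
  unfold degOf
  rw [Finset.card_eq_zero, Finset.filter_eq_empty_iff]
  intro S hS hmem
  exact absurd (Finset.mem_range.1 (hF S hS hmem)) (not_lt.2 he)

lemma card_le_pow {n : ℕ} {F : Finset (Finset ℕ)} (hF : FamilyOn n F) : F.card ≤ 2 ^ n := by
  have h : F ⊆ (Finset.range n).powerset := fun S hS => Finset.mem_powerset.2 (hF S hS)
  calc F.card ≤ ((Finset.range n).powerset).card := Finset.card_le_card h
    _ = 2 ^ n := by rw [Finset.card_powerset, Finset.card_range]

/- ### trimming -/

lemma erase_minimal_unionClosed {F : Finset (Finset ℕ)} (hUC : UnionClosed F)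
    (hne : F.Nonempty) : ∃ S ∈ F, UnionClosed (F.erase S) := by
  obtain ⟨S, hS, hmin⟩ : ∃ S ∈ F, ∀ T ∈ F, ¬ T < S := by
    obtain ⟨S, hS⟩ := Finset.exists_minimal hne
    exact ⟨S, hS.prop, fun T hT hlt => lt_irrefl _ (lt_of_lt_of_le hlt (hS.2 hT hlt.le))⟩
  refine ⟨S, hS, ?_⟩
  intro T hT U hU
  have hT' := Finset.mem_of_mem_erase hT
  have hU' := Finset.mem_of_mem_erase hU
  have hTU : T ∪ U ∈ F := hUC T hT' U hU'
  rcases eq_or_ne (T ∪ U) S with h | h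
  · exfalso
    have hTS : T ⊆ S := h ▸ Finset.subset_union_left
    have hTne : T ≠ S := Finset.ne_of_mem_erase hT
    exact hmin T hT' (lt_of_le_of_ne hTS hTne)
  · exact Finset.mem_erase.2 ⟨h, hTU⟩

lemma exists_trim {F : Finset (Finset ℕ)} (hUC : UnionClosed F) :
    ∀ m, m ≤ F.card → ∃ G, G ⊆ F ∧ UnionClosed G ∧ G.card = m := by
  induction F using Finset.strongInduction with
  | _ F ih =>
    intro m hm
    rcases eq_or_lt_of_le hm with h | h
    · exact ⟨F, Finset.Subset.refl F, hUC, h.symm⟩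
    · have hne : F.Nonempty := Finset.card_pos.1 (lt_of_le_of_lt (Nat.zero_le m) h)
      obtain ⟨S, hS, hUC'⟩ := erase_minimal_unionClosed hUC hne
      have hsub : F.erase S ⊂ F := Finset.erase_ssubset hS
      have hcard : (F.erase S).card = F.card - 1 := Finset.card_erase_of_mem hS
      have hm' : m ≤ (F.erase S).card := by omega
      obtain ⟨G, hG1, hG2, hG3⟩ := ih (F.erase S) hsub hUC' m hm'
      exact ⟨G, hG1.trans (Finset.erase_subset S F), hG2, hG3⟩

/- ### the bit construction -/

def bitset (K x : ℕ) : Finset ℕ := (Finset.range K).filter (fun i => x.testBit i)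

lemma mem_bitset {K x e : ℕ} : e ∈ bitset K x ↔ e < K ∧ x.testBit e := by
  simp [bitset]

lemma nat_le_or_left (x y : ℕ) : x ≤ x ||| y := by
  have h : (x ||| y) &&& x = x := by
    apply Nat.eq_of_testBit_eq
    intro i
    rw [Nat.testBit_and, Nat.testBit_or]
    cases hx : x.testBit i <;> cases hy : y.testBit i <;> rfl
  calc x = (x ||| y) &&& x := h.symm
    _ ≤ x ||| y := Nat.and_le_left

lemma bitset_union (K x y : ℕ) : bitset K x ∪ bitset K y = bitset K (x ||| y) := by
  ext e
  simp only [Finset.mem_union, mem_bitset, Nat.testBit_or]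
  constructor
  · rintro (⟨h1, h2⟩ | ⟨h1, h2⟩) <;> simp [h1, h2]
  · rintro ⟨h1, h2⟩
    rcases Bool.or_eq_true_iff.1 h2 with h | h
    · exact Or.inl ⟨h1, h⟩
    · exact Or.inr ⟨h1, h⟩

lemma bitset_injOn {K : ℕ} {x y : ℕ} (hx : x < 2 ^ K) (hy : y < 2 ^ K)
    (h : bitset K x = bitset K y) : x = y := by
  apply Nat.eq_of_testBit_eq
  intro i
  by_cases hi : i < K
  · have := congrArg (fun s => i ∈ s) h
    simp only [mem_bitset, eq_iff_iff] at this
    by_cases hxb : x.testBit i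
    · have : i < K ∧ y.testBit i := this.1 ⟨hi, hxb⟩
      rw [hxb, this.2]
    · by_cases hyb : y.testBit i
      · exact absurd (this.2 ⟨hi, hyb⟩).2 hxb
      · rw [Bool.eq_false_iff.2 hxb, Bool.eq_false_iff.2 hyb]
  · have h1 : x.testBit i = false :=
      Nat.testBit_lt_two_pow (lt_of_lt_of_le hx (Nat.pow_le_pow_right (by norm_num) (not_lt.1 hi)))
    have h2 : y.testBit i = false :=
      Nat.testBit_lt_two_pow (lt_of_lt_of_le hy (Nat.pow_le_pow_right (by norm_num) (not_lt.1 hi)))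
    rw [h1, h2]

lemma card_testBit (K e : ℕ) (he : e < K) :
    ((Finset.range (2 ^ K)).filter (fun x => x.testBit e)).card = 2 ^ (K - 1) := by
  classical
  set A := (Finset.range (2 ^ K)).filter (fun x => x.testBit e) with hA
  set B := (Finset.range (2 ^ K)).filter (fun x => ¬ x.testBit e) with hB
  have he2 : 2 ^ e < 2 ^ K := Nat.pow_lt_pow_right (by norm_num) he
  have hxor : ∀ x : ℕ, (x ^^^ 2 ^ e).testBit e = ! x.testBit e := by
    intro x
    rw [Nat.testBit_xor, Nat.testBit_two_pow_self]
    cases x.testBit e <;> rfl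
  have hcard : A.card = B.card := by
    refine Finset.card_bij' (fun x _ => x ^^^ 2 ^ e) (fun x _ => x ^^^ 2 ^ e) ?_ ?_ ?_ ?_
    · intro a ha
      simp only [hA, hB, Finset.mem_filter, Finset.mem_range] at ha ⊢
      refine ⟨Nat.xor_lt_two_pow ha.1 he2, ?_⟩
      rw [hxor a, ha.2]
      simp
    · intro a ha
      simp only [hA, hB, Finset.mem_filter, Finset.mem_range] at ha ⊢
      refine ⟨Nat.xor_lt_two_pow ha.1 he2, ?_⟩
      rw [hxor a]
      simp only [Bool.not_eq_true] at ha
      rw [ha.2]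
      rfl
    · intro a _; simp [Nat.xor_assoc]
    · intro a _; simp [Nat.xor_assoc]
  have hsum : A.card + B.card = 2 ^ K := by
    rw [hA, hB]
    rw [Finset.card_filter_add_card_filter_not]
    exact Finset.card_range (2 ^ K)
  have hK : 2 ^ K = 2 * 2 ^ (K - 1) := by
    rw [← pow_succ']
    congr 1
    omega
  omega

lemma exists_bit_family (K m : ℕ) (hm : m ≤ 2 ^ K) :
    ∃ F : Finset (Finset ℕ), UnionClosed F ∧ FamilyOn K F ∧ F.card = m ∧
      ∀ e, degOf F e ≤ 2 ^ (K - 1) := by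
  classical
  set c := 2 ^ K - m with hc
  set F := (Finset.Ico c (2 ^ K)).image (bitset K) with hF
  have hmemIco : ∀ x ∈ Finset.Ico c (2 ^ K), x < 2 ^ K := by
    intro x hx; exact (Finset.mem_Ico.1 hx).2
  have hinj : Set.InjOn (bitset K) (Finset.Ico c (2 ^ K)) := by
    intro x hx y hy hxy
    exact bitset_injOn (hmemIco x hx) (hmemIco y hy) hxy
  refine ⟨F, ?_, ?_, ?_, ?_⟩
  · -- union closed
    intro S hS T hT
    simp only [hF, Finset.mem_image] at hS hT ⊢
    obtain ⟨x, hx, rfl⟩ := hS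
    obtain ⟨y, hy, rfl⟩ := hT
    refine ⟨x ||| y, ?_, (bitset_union K x y).symm⟩
    rw [Finset.mem_Ico] at hx hy ⊢
    exact ⟨le_trans hx.1 (nat_le_or_left x y), Nat.or_lt_two_pow hx.2 hy.2⟩
  · -- family on K
    intro S hS
    simp only [hF, Finset.mem_image] at hS
    obtain ⟨x, _, rfl⟩ := hS
    exact Finset.filter_subset _ _
  · -- card
    rw [hF, Finset.card_image_of_injOn hinj, Nat.card_Ico]
    omega
  · -- degrees
    intro e
    by_cases he : e < K
    · unfold degOf
      rw [hF, Finset.filter_image]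
      calc (((Finset.Ico c (2 ^ K)).filter (fun x => e ∈ bitset K x)).image (bitset K)).card
          ≤ ((Finset.Ico c (2 ^ K)).filter (fun x => e ∈ bitset K x)).card :=
            Finset.card_image_le
        _ ≤ ((Finset.range (2 ^ K)).filter (fun x => x.testBit e)).card := by
            apply Finset.card_le_card
            intro x hx
            rw [Finset.mem_filter] at hx ⊢
            refine ⟨Finset.mem_range.2 (hmemIco x hx.1), (mem_bitset.1 hx.2).2⟩
        _ = 2 ^ (K - 1) := card_testBit K e he
    · have h0 : degOf F e = 0 := by
        apply degOf_eq_zero (n := K) _ (not_lt.1 he)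
        intro S hS
        simp only [hF, Finset.mem_image] at hS
        obtain ⟨x, _, rfl⟩ := hS
        exact Finset.filter_subset _ _
      rw [h0]
      exact Nat.zero_le _


/- ### franklF basics -/

def franklFSet (n a : ℕ) : Set ℕ :=
  {m | ∃ F : Finset (Finset ℕ), UnionClosed F ∧ FamilyOn n F ∧ F.Nonempty ∧
    (∀ e ∈ Finset.range n, degOf F e ≤ a) ∧ F.card = m}

lemma franklF_eq (n a : ℕ) : franklF n a = sSup (franklFSet n a) := rfl

lemma franklFSet_bddAbove (n a : ℕ) : BddAbove (franklFSet n a) := by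
  refine ⟨2 ^ n, ?_⟩
  rintro m ⟨F, _, hOn, _, _, hcard⟩
  exact hcard ▸ card_le_pow hOn

lemma one_mem_franklFSet (n a : ℕ) : 1 ∈ franklFSet n a := by
  refine ⟨{∅}, ?_, ?_, ⟨∅, Finset.mem_singleton_self ∅⟩, ?_, Finset.card_singleton ∅⟩
  · intro S hS T hT
    rw [Finset.mem_singleton] at hS hT
    subst hS; subst hT
    simp
  · intro S hS
    rw [Finset.mem_singleton] at hS
    subst hS
    exact Finset.empty_subset _
  · intro e _
    unfold degOf
    rw [Finset.filter_singleton]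
    simp

lemma franklFSet_nonempty (n a : ℕ) : (franklFSet n a).Nonempty :=
  ⟨1, one_mem_franklFSet n a⟩

lemma le_franklF {n a m : ℕ} (h : m ∈ franklFSet n a) : m ≤ franklF n a :=
  le_csSup (franklFSet_bddAbove n a) h

lemma franklF_spec (n a : ℕ) : franklF n a ∈ franklFSet n a :=
  Nat.sSup_mem (franklFSet_nonempty n a) (franklFSet_bddAbove n a)

lemma one_le_franklF (n a : ℕ) : 1 ≤ franklF n a :=
  le_franklF (one_mem_franklFSet n a)

lemma franklF_le_pow (n a : ℕ) : franklF n a ≤ 2 ^ n := by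
  obtain ⟨F, _, hOn, _, _, hcard⟩ := franklF_spec n a
  exact hcard ▸ card_le_pow hOn

/- ### franklG basics -/

def franklGSet (n m : ℕ) : Set ℕ :=
  {a | ∃ F : Finset (Finset ℕ), UnionClosed F ∧ FamilyOn n F ∧ F.card = m ∧
    (Finset.range n).sup (degOf F) = a}

lemma franklG_eq (n m : ℕ) : franklG n m = sInf (franklGSet n m) := rfl

lemma franklGSet_nonempty {n m : ℕ} (h : m ≤ 2 ^ n) : (franklGSet n m).Nonempty := by
  obtain ⟨F, hUC, hOn, hcard, _⟩ := exists_bit_family n m h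
  exact ⟨(Finset.range n).sup (degOf F), F, hUC, hOn, hcard, rfl⟩

lemma franklG_spec {n m : ℕ} (h : m ≤ 2 ^ n) : franklG n m ∈ franklGSet n m :=
  Nat.sInf_mem (franklGSet_nonempty h)

lemma franklG_le {n m : ℕ} {F : Finset (Finset ℕ)} (hUC : UnionClosed F) (hOn : FamilyOn n F)
    (hcard : F.card = m) : franklG n m ≤ (Finset.range n).sup (degOf F) :=
  Nat.sInf_le ⟨F, hUC, hOn, hcard, rfl⟩

/- ### monotonicity -/

lemma franklF_mono (n a : ℕ) : franklF n a ≤ franklF (n + 1) a := by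
  obtain ⟨F, hUC, hOn, hne, hdeg, hcard⟩ := franklF_spec n a
  apply le_franklF
  refine ⟨F, hUC, ?_, hne, ?_, hcard⟩
  · intro S hS
    exact (hOn S hS).trans (Finset.range_subset_range.2 (Nat.le_succ n))
  · intro e he
    rcases Nat.lt_or_ge e n with h | h
    · exact hdeg e (Finset.mem_range.2 h)
    · rw [degOf_eq_zero hOn h]
      exact Nat.zero_le a

lemma franklG_anti {n m : ℕ} (h : m ≤ 2 ^ n) : franklG (n + 1) m ≤ franklG n m := by
  obtain ⟨F, hUC, hOn, hcard, hsup⟩ := franklG_spec h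
  have hOn' : FamilyOn (n + 1) F := fun S hS =>
    (hOn S hS).trans (Finset.range_subset_range.2 (Nat.le_succ n))
  have := franklG_le (n := n + 1) hUC hOn' hcard
  rw [Finset.range_add_one, Finset.sup_insert, degOf_eq_zero hOn (le_refl n)] at this
  simpa [hsup] using this

/- ### Galois connection -/

lemma franklG_le_iff {n m a : ℕ} (hm : 1 ≤ m) (hmn : m ≤ 2 ^ n) :
    franklG n m ≤ a ↔ m ≤ franklF n a := by
  constructor
  · intro h
    obtain ⟨F, hUC, hOn, hcard, hsup⟩ := franklG_spec hmn
    apply le_franklF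
    refine ⟨F, hUC, hOn, Finset.card_pos.1 (hcard ▸ hm), ?_, hcard⟩
    intro e he
    exact le_trans (Finset.le_sup he) (hsup ▸ h)
  · intro h
    obtain ⟨F, hUC, hOn, _, hdeg, hcard⟩ := franklF_spec n a
    obtain ⟨G, hGF, hGUC, hGcard⟩ := exists_trim hUC m (hcard ▸ h)
    calc franklG n m ≤ (Finset.range n).sup (degOf G) :=
          franklG_le hGUC (fun S hS => hOn S (hGF hS)) hGcard
      _ ≤ a := Finset.sup_le fun e he => le_trans (degOf_mono hGF e) (hdeg e he)

/- ### auxiliary facts for the assembly -/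

lemma one_le_franklG {n m : ℕ} (hm : 2 ≤ m) (hmn : m ≤ 2 ^ n) : 1 ≤ franklG n m := by
  obtain ⟨F, hUC, hOn, hcard, hsup⟩ := franklG_spec hmn
  obtain ⟨S, hS, T, hT, hST⟩ := Finset.one_lt_card.1 (by omega : 1 < F.card)
  have : ∃ U ∈ F, U.Nonempty := by
    rcases Finset.eq_empty_or_nonempty S with h | h
    · subst h
      exact ⟨T, hT, Finset.nonempty_iff_ne_empty.2 (fun hh => hST hh.symm)⟩
    · exact ⟨S, hS, h⟩
  obtain ⟨U, hU, e, he⟩ := this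
  have hen : e ∈ Finset.range n := hOn U hU he
  have : 1 ≤ degOf F e := by
    unfold degOf
    rw [Nat.one_le_iff_ne_zero, ← Nat.pos_iff_ne_zero, Finset.card_pos]
    exact ⟨U, Finset.mem_filter.2 ⟨hU, he⟩⟩
  calc 1 ≤ degOf F e := this
    _ ≤ (Finset.range n).sup (degOf F) := Finset.le_sup hen
    _ = franklG n m := hsup

lemma franklG_le_pow_clog {n m k : ℕ} (hm : m ≤ 2 ^ k) (hkn : k ≤ n) :
    franklG n m ≤ 2 ^ (k - 1) := by
  obtain ⟨F, hUC, hOn, hcard, hdeg⟩ := exists_bit_family k m hm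
  have hOn' : FamilyOn n F := fun S hS =>
    (hOn S hS).trans (Finset.range_subset_range.2 hkn)
  calc franklG n m ≤ (Finset.range n).sup (degOf F) := franklG_le hUC hOn' hcard
    _ ≤ 2 ^ (k - 1) := Finset.sup_le fun e _ => hdeg e

lemma powerset_degree {n : ℕ} {F : Finset (Finset ℕ)} (hOn : FamilyOn n F)
    (hcard : F.card = 2 ^ n) {e : ℕ} (he : e < n) : 2 ^ (n - 1) ≤ degOf F e := by
  have hsub : F ⊆ (Finset.range n).powerset := fun S hS => Finset.mem_powerset.2 (hOn S hS)
  have hF : F = (Finset.range n).powerset := by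
    apply Finset.eq_of_subset_of_card_le hsub
    rw [Finset.card_powerset, Finset.card_range, hcard]
  subst hF
  unfold degOf
  have : ((Finset.range n).erase e).powerset.card ≤
      (((Finset.range n).powerset).filter (fun S => e ∈ S)).card := by
    apply Finset.card_le_card_of_injOn (fun S => insert e S)
    · intro S hS
      rw [Finset.mem_coe, Finset.mem_powerset] at hS
      rw [Finset.mem_coe, Finset.mem_filter, Finset.mem_powerset]
      refine ⟨Finset.insert_subset (Finset.mem_range.2 he) (hS.trans (Finset.erase_subset e _)), Finset.mem_insert_self e S⟩
    · intro S hS T hT hST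
      rw [Finset.mem_coe, Finset.mem_powerset] at hS hT
      have heS : e ∉ S := fun h => (Finset.notMem_erase e _) (hS h)
      have heT : e ∉ T := fun h => (Finset.notMem_erase e _) (hT h)
      have hST' : insert e S = insert e T := hST
      rw [← Finset.erase_insert heS, ← Finset.erase_insert heT, hST']
  calc 2 ^ (n - 1) = ((Finset.range n).erase e).powerset.card := by
        rw [Finset.card_powerset, Finset.card_erase_of_mem (Finset.mem_range.2 he), Finset.card_range]
    _ ≤ _ := this

/- clog helpers -/
lemma le_two_pow_iff_clog {m k : ℕ} : m ≤ 2 ^ k ↔ Nat.clog 2 m ≤ k :=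
  (Nat.clog_le_iff_le_pow (by norm_num)).symm

/-- Cover bound: if `B` is "co-union-closed" (whenever `z ∈ B` and `x ∪ y = z`, one of
`x, y` lies in `B`), then the members of `B` cover at most `B.card` elements. -/
lemma coUC_cover_card_aux : ∀ (k : ℕ) (B : Finset (Finset ℕ)), B.card ≤ k →
    (∀ z ∈ B, ∀ x y : Finset ℕ, x ∪ y = z → x ∈ B ∨ y ∈ B) →
    (B.biUnion id).card ≤ B.card := by
  intro k
  induction k with
  | zero =>
    intro B hB _
    have : B = ∅ := Finset.card_eq_zero.1 (Nat.le_zero.1 hB)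
    subst this
    simp
  | succ k ih =>
    intro B hB h
    rcases Finset.eq_empty_or_nonempty B with rfl | hne
    · simp
    by_cases h0 : ∅ ∈ B
    · -- remove ∅, union unchanged
      set B' := B.erase ∅ with hB'
      have hco : ∀ z ∈ B', ∀ x y : Finset ℕ, x ∪ y = z → x ∈ B' ∨ y ∈ B' := by
        intro z hz x y hxy
        rcases eq_or_ne x ∅ with rfl | hxne
        · rw [Finset.empty_union] at hxy
          exact Or.inr (hxy ▸ hz)
        rcases eq_or_ne y ∅ with rfl | hyne
        · rw [Finset.union_empty] at hxy
          exact Or.inl (hxy ▸ hz)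
        rcases h z (Finset.mem_of_mem_erase hz) x y hxy with hx | hy
        · exact Or.inl (Finset.mem_erase.2 ⟨hxne, hx⟩)
        · exact Or.inr (Finset.mem_erase.2 ⟨hyne, hy⟩)
      have hcard' : B'.card ≤ k := by
        have h1 := Finset.card_erase_of_mem h0
        have h2 := Finset.card_pos.2 hne
        rw [← hB'] at h1
        omega
      have hun : B.biUnion id ⊆ B'.biUnion id := by
        intro j hj
        rw [Finset.mem_biUnion] at hj ⊢
        obtain ⟨z, hz, hjz⟩ := hj
        rcases eq_or_ne z ∅ with rfl | hzne
        · simp at hjz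
        · exact ⟨z, Finset.mem_erase.2 ⟨hzne, hz⟩, hjz⟩
      calc (B.biUnion id).card ≤ (B'.biUnion id).card := Finset.card_le_card hun
        _ ≤ B'.card := ih B' hcard' hco
        _ ≤ B.card := Finset.card_le_card (Finset.erase_subset _ _)
    · -- minimal member is a singleton {i}
      obtain ⟨z₀, hz₀, hmin⟩ := Finset.exists_min_image B (fun z => z.card) hne
      have hz₀ne : z₀ ≠ ∅ := fun hh => h0 (hh ▸ hz₀)
      obtain ⟨i, hi⟩ := Finset.nonempty_iff_ne_empty.2 hz₀ne
      have hz₀card : z₀.card = 1 := by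
        by_contra hcard
        have h2 : 2 ≤ z₀.card := by
          have := Finset.card_pos.2 ⟨i, hi⟩
          omega
        have hxy : {i} ∪ z₀.erase i = z₀ := by
          ext a
          simp only [Finset.mem_union, Finset.mem_singleton, Finset.mem_erase]
          constructor
          · rintro (rfl | ⟨_, ha⟩)
            · exact hi
            · exact ha
          · intro ha
            rcases eq_or_ne a i with rfl | hne'
            · exact Or.inl rfl
            · exact Or.inr ⟨hne', ha⟩
        rcases h z₀ hz₀ {i} (z₀.erase i) hxy with hx | hy
        · have := hmin _ hx
          rw [Finset.card_singleton] at this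
          omega
        · have h3 := hmin _ hy
          rw [Finset.card_erase_of_mem hi] at h3
          omega
      have hz₀eq : z₀ = {i} := by
        obtain ⟨a, ha⟩ := Finset.card_eq_one.1 hz₀card
        rw [ha] at hi ⊢
        rw [Finset.mem_singleton] at hi
        rw [hi]
      have hiB : ({i} : Finset ℕ) ∈ B := hz₀eq ▸ hz₀
      set C := (B.erase {i}).image (fun z => z.erase i) with hC
      have hCcard : C.card ≤ B.card - 1 := by
        calc C.card ≤ (B.erase {i}).card := Finset.card_image_le
          _ = B.card - 1 := Finset.card_erase_of_mem hiB
      have hCco : ∀ w ∈ C, ∀ x y : Finset ℕ, x ∪ y = w → x ∈ C ∨ y ∈ C := by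
        intro w hw x y hxy
        rcases eq_or_ne x ∅ with rfl | hxne
        · rw [Finset.empty_union] at hxy
          exact Or.inr (hxy ▸ hw)
        rcases eq_or_ne y ∅ with rfl | hyne
        · rw [Finset.union_empty] at hxy
          exact Or.inl (hxy ▸ hw)
        obtain ⟨z, hz, hzw⟩ := Finset.mem_image.1 hw
        have hzB : z ∈ B := Finset.mem_of_mem_erase hz
        have hiw : i ∉ w := hzw ▸ Finset.notMem_erase i z
        have hix : i ∉ x := fun hh => hiw (hxy ▸ Finset.mem_union_left y hh)
        have hiy : i ∉ y := fun hh => hiw (hxy ▸ Finset.mem_union_right x hh)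
        by_cases hiz : i ∈ z
        · have hins : insert i w = z := by
            rw [← hzw]
            exact Finset.insert_erase hiz
          have hxy' : (insert i x) ∪ y = z := by
            rw [← hins, ← hxy]
            ext a
            simp only [Finset.mem_union, Finset.mem_insert]
            tauto
          rcases h z hzB (insert i x) y hxy' with hx' | hy'
          · left
            have hne' : insert i x ≠ {i} := by
              intro hh
              obtain ⟨a, ha⟩ := Finset.nonempty_iff_ne_empty.2 hxne
              have h5 : a ∈ insert i x := Finset.mem_insert_of_mem ha
              rw [hh, Finset.mem_singleton] at h5
              exact hix (h5 ▸ ha)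
            refine Finset.mem_image.2 ⟨insert i x, Finset.mem_erase.2 ⟨hne', hx'⟩, ?_⟩
            rw [Finset.erase_insert hix]
          · right
            have hne' : y ≠ {i} := fun hh => hiy (hh ▸ Finset.mem_singleton_self i)
            refine Finset.mem_image.2 ⟨y, Finset.mem_erase.2 ⟨hne', hy'⟩, ?_⟩
            exact Finset.erase_eq_of_notMem hiy
        · have hzw' : z = w := by
            rw [← hzw]
            exact (Finset.erase_eq_of_notMem hiz).symm
          rcases h z hzB x y (hzw' ▸ hxy) with hx' | hy'
          · left
            have hne' : x ≠ {i} := fun hh => hix (hh ▸ Finset.mem_singleton_self i)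
            refine Finset.mem_image.2 ⟨x, Finset.mem_erase.2 ⟨hne', hx'⟩, ?_⟩
            exact Finset.erase_eq_of_notMem hix
          · right
            have hne' : y ≠ {i} := fun hh => hiy (hh ▸ Finset.mem_singleton_self i)
            refine Finset.mem_image.2 ⟨y, Finset.mem_erase.2 ⟨hne', hy'⟩, ?_⟩
            exact Finset.erase_eq_of_notMem hiy
      have hsubC : B.biUnion id ⊆ insert i (C.biUnion id) := by
        intro j hj
        obtain ⟨z, hz, hjz⟩ := Finset.mem_biUnion.1 hj
        simp only [id_eq] at hjz
        rcases eq_or_ne j i with rfl | hne'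
        · exact Finset.mem_insert_self _ _
        · have hzne : z ≠ {i} := by
            intro hh
            rw [hh, Finset.mem_singleton] at hjz
            exact hne' hjz
          refine Finset.mem_insert_of_mem (Finset.mem_biUnion.2
            ⟨z.erase i, Finset.mem_image.2 ⟨z, Finset.mem_erase.2 ⟨hzne, hz⟩, rfl⟩, ?_⟩)
          exact Finset.mem_erase.2 ⟨hne', hjz⟩
      have hBpos : 1 ≤ B.card := Finset.card_pos.2 hne
      calc (B.biUnion id).card ≤ (insert i (C.biUnion id)).card := Finset.card_le_card hsubC
        _ ≤ (C.biUnion id).card + 1 := Finset.card_insert_le _ _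
        _ ≤ C.card + 1 := by
            have := ih C (by omega) hCco
            omega
        _ ≤ B.card := by omega

lemma coUC_cover_card (B : Finset (Finset ℕ))
    (h : ∀ z ∈ B, ∀ x y : Finset ℕ, x ∪ y = z → x ∈ B ∨ y ∈ B) :
    (B.biUnion id).card ≤ B.card :=
  coUC_cover_card_aux B.card B (le_refl _) h

/-- Singleton lemma: if `{e} ∈ G` and `G` is union-closed, then `e` has degree at least
half the size of `G`. -/
lemma singleton_degree {G : Finset (Finset ℕ)} (hUC : UnionClosed G) {e : ℕ}
    (h1 : ({e} : Finset ℕ) ∈ G) : G.card ≤ 2 * degOf G e := by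
  classical
  have hinj : (G.filter (fun S => e ∉ S)).card ≤ (G.filter (fun S => e ∈ S)).card := by
    apply Finset.card_le_card_of_injOn (fun S => S ∪ {e})
    · intro S hS
      rw [Finset.mem_coe, Finset.mem_filter] at hS
      rw [Finset.mem_coe, Finset.mem_filter]
      exact ⟨hUC S hS.1 {e} h1, Finset.mem_union_right S (Finset.mem_singleton_self e)⟩
    · intro S hS T hT hST
      rw [Finset.mem_coe, Finset.mem_filter] at hS hT
      have hST' : S ∪ {e} = T ∪ {e} := hST
      have h2 : ∀ U : Finset ℕ, e ∉ U → (U ∪ {e}).erase e = U := by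
        intro U hU
        ext a
        simp only [Finset.mem_erase, Finset.mem_union, Finset.mem_singleton]
        constructor
        · rintro ⟨hne, hc | rfl⟩
          · exact hc
          · exact absurd rfl hne
        · intro ha
          exact ⟨fun hh => hU (hh ▸ ha), Or.inl ha⟩
      rw [← h2 S hS.2, ← h2 T hT.2, hST']
  have hsplit : (G.filter (fun S => e ∈ S)).card + (G.filter (fun S => e ∉ S)).card = G.card := by
    have h2 := Finset.card_filter_add_card_filter_not (s := G) (p := fun S => e ∈ S)
    simpa using h2
  unfold degOf
  omega

/-- From any element of positive degree one can remove a set containing it while keeping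
the family union-closed (choose an `e`-containing member of minimum cardinality). -/
lemma exists_removable {G : Finset (Finset ℕ)} (hUC : UnionClosed G) {e : ℕ}
    (hdeg : 1 ≤ degOf G e) : ∃ v ∈ G, e ∈ v ∧ UnionClosed (G.erase v) := by
  classical
  have hne : (G.filter (fun S => e ∈ S)).Nonempty := by
    rw [← Finset.card_pos]
    exact hdeg
  obtain ⟨v, hv, hmin⟩ := Finset.exists_min_image _ (fun S => S.card) hne
  rw [Finset.mem_filter] at hv
  refine ⟨v, hv.1, hv.2, ?_⟩
  intro T hT U hU
  have hT' := Finset.mem_of_mem_erase hT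
  have hU' := Finset.mem_of_mem_erase hU
  have hTU : T ∪ U ∈ G := hUC T hT' U hU'
  rcases eq_or_ne (T ∪ U) v with heq | hne'
  · exfalso
    have he' : e ∈ T ∪ U := heq ▸ hv.2
    rw [Finset.mem_union] at he'
    rcases he' with heT | heU
    · have h3 := hmin T (Finset.mem_filter.2 ⟨hT', heT⟩)
      have h4 : T ⊆ v := heq ▸ Finset.subset_union_left
      have h5 : T ≠ v := Finset.ne_of_mem_erase hT
      have h6 : T.card < v.card := Finset.card_lt_card (lt_of_le_of_ne h4 h5)
      omega
    · have h3 := hmin U (Finset.mem_filter.2 ⟨hU', heU⟩)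
      have h4 : U ⊆ v := heq ▸ Finset.subset_union_right
      have h5 : U ≠ v := Finset.ne_of_mem_erase hU
      have h6 : U.card < v.card := Finset.card_lt_card (lt_of_le_of_ne h4 h5)
      omega
  · exact Finset.mem_erase.2 ⟨hne', hTU⟩

lemma degOf_erase_of_mem {G : Finset (Finset ℕ)} {v : Finset ℕ} (hv : v ∈ G) {e : ℕ}
    (he : e ∈ v) : degOf (G.erase v) e = degOf G e - 1 := by
  unfold degOf
  rw [Finset.filter_erase]
  exact Finset.card_erase_of_mem (Finset.mem_filter.2 ⟨hv, he⟩)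

lemma degOf_erase_of_not_mem {G : Finset (Finset ℕ)} {v : Finset ℕ} {e : ℕ}
    (he : e ∉ v) : degOf (G.erase v) e = degOf G e := by
  unfold degOf
  rw [Finset.filter_erase]
  exact congrArg Finset.card (Finset.erase_eq_of_notMem
    (fun hh => he (Finset.mem_filter.1 hh).2))

/-- Removal loop: we can delete at most `E.card` members of `G`, keeping the family
union-closed, so that the degree of every element of `E` strictly decreases. -/
lemma removal_loop : ∀ (E : Finset ℕ) (G : Finset (Finset ℕ)), UnionClosed G →
    (∀ e ∈ E, 1 ≤ degOf G e) →
    ∃ G', G' ⊆ G ∧ UnionClosed G' ∧ G.card ≤ G'.card + E.card ∧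
      ∀ e ∈ E, degOf G' e < degOf G e := by
  intro E
  induction E using Finset.strongInduction with
  | _ E ihE =>
    intro G hUC hdeg
    rcases Finset.eq_empty_or_nonempty E with rfl | ⟨e, he⟩
    · exact ⟨G, Finset.Subset.refl G, hUC, by simp, by simp⟩
    obtain ⟨v, hvG, hev, hUC'⟩ := exists_removable hUC (hdeg e he)
    set E₁ := E.filter (fun x => x ∉ v) with hE₁
    have hE₁sub : E₁ ⊂ E := by
      refine Finset.filter_ssubset.2 ⟨e, he, ?_⟩
      simp [hev]
    have hdeg₁ : ∀ x ∈ E₁, 1 ≤ degOf (G.erase v) x := by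
      intro x hx
      rw [Finset.mem_filter] at hx
      rw [degOf_erase_of_not_mem hx.2]
      exact hdeg x hx.1
    obtain ⟨G', hG'sub, hG'UC, hG'card, hG'deg⟩ := ihE E₁ hE₁sub (G.erase v) hUC' hdeg₁
    refine ⟨G', hG'sub.trans (Finset.erase_subset _ _), hG'UC, ?_, ?_⟩
    · have h1 : (G.erase v).card = G.card - 1 := Finset.card_erase_of_mem hvG
      have h2 : E₁.card < E.card := Finset.card_lt_card hE₁sub
      have h3 : 1 ≤ G.card := Finset.card_pos.2 ⟨v, hvG⟩
      omega
    · intro x hx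
      by_cases hxv : x ∈ v
      · have h1 : degOf G' x ≤ degOf (G.erase v) x := degOf_mono hG'sub x
        have h2 : degOf (G.erase v) x = degOf G x - 1 := degOf_erase_of_mem hvG hxv
        have h3 := hdeg x hx
        omega
      · have h1 : degOf G' x < degOf (G.erase v) x :=
          hG'deg x (Finset.mem_filter.2 ⟨hx, hxv⟩)
        rw [degOf_erase_of_not_mem hxv] at h1
        exact h1

/-- The `f`-conjecture and the `g`-conjecture are equivalent:
`f(n,a) = f(n+1,a)` for all positive `a, n` with `n ≥ ⌈log₂ a⌉ + 1` if and only if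
`g(n',m) = g(n'+1,m)` for all positive `m, n'` with `m ≥ 2` and `n' ≥ ⌈log₂ m⌉`. -/
theorem franklF_conj_iff_franklG_conj :
    (∀ a n : ℕ, 0 < a → 0 < n → Nat.clog 2 a + 1 ≤ n →
      franklF n a = franklF (n + 1) a) ↔
    (∀ m n' : ℕ, 2 ≤ m → 0 < n' → Nat.clog 2 m ≤ n' →
      franklG n' m = franklG (n' + 1) m) := by
  constructor
  · -- (i) → (ii)
    intro hf m n' hm hn' hclog
    have hmn' : m ≤ 2 ^ n' := le_two_pow_iff_clog.2 hclog
    have hmn'' : m ≤ 2 ^ (n' + 1) := hmn'.trans (Nat.pow_le_pow_right (by norm_num) (Nat.le_succ n'))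
    set a := franklG (n' + 1) m with ha
    have ha1 : 1 ≤ a := one_le_franklG hm hmn''
    have hclog1 : 1 ≤ Nat.clog 2 m := by
      by_contra h
      push_neg at h
      have h0 : Nat.clog 2 m ≤ 0 := by omega
      have h1 : m ≤ 2 ^ 0 := le_two_pow_iff_clog.2 h0
      norm_num at h1
      omega
    have hale : a ≤ 2 ^ (n' - 1) := by
      have h1 : m ≤ 2 ^ (Nat.clog 2 m) := Nat.le_pow_clog (by norm_num) m
      have h2 : franklG (n' + 1) m ≤ 2 ^ (Nat.clog 2 m - 1) :=
        franklG_le_pow_clog h1 (hclog.trans (Nat.le_succ n'))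
      exact h2.trans (Nat.pow_le_pow_right (by norm_num) (by omega))
    have haclog : Nat.clog 2 a + 1 ≤ n' := by
      have : Nat.clog 2 a ≤ n' - 1 := le_two_pow_iff_clog.1 hale
      omega
    have heq := hf a n' ha1 hn' haclog
    have h1 : m ≤ franklF (n' + 1) a :=
      (franklG_le_iff (by omega) hmn'').1 (le_refl a)
    have h2 : m ≤ franklF n' a := heq ▸ h1
    have h3 : franklG n' m ≤ a := (franklG_le_iff (by omega) hmn').2 h2
    exact le_antisymm h3 (franklG_anti hmn')
  · -- (ii) → (i)
    intro hg a n ha hn hclog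
    have hale : a ≤ 2 ^ (n - 1) := by
      have : Nat.clog 2 a ≤ n - 1 := by omega
      exact le_two_pow_iff_clog.2 this
    refine le_antisymm (franklF_mono n a) ?_
    by_contra hlt
    push_neg at hlt
    set m₀ := franklF n a with hm₀
    have hm₀1 : 1 ≤ m₀ := one_le_franklF n a
    have hm₀pow : m₀ ≤ 2 ^ n := franklF_le_pow n a
    rcases eq_or_lt_of_le hm₀pow with hedge | hmid
    · -- edge case : m₀ = 2^n forces a = 2^(n-1); use conj_g at m' slightly below 2^n
      obtain ⟨F, hUC, hOn, _, hdeg, hcard⟩ := franklF_spec n a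
      have hFcard : F.card = 2 ^ n := by rw [hcard, ← hm₀, hedge]
      have hage : 2 ^ (n - 1) ≤ a := by
        have h0 : (0 : ℕ) < n := hn
        have := powerset_degree hOn hFcard (e := 0) h0
        exact this.trans (hdeg 0 (Finset.mem_range.2 h0))
      have haeq : a = 2 ^ (n - 1) := le_antisymm hale hage
      -- a family of card 2^n + 1 on [n+1] with degrees ≤ a
      obtain ⟨H, hHUC, hHOn, _, hHdeg, hHcard⟩ := franklF_spec (n + 1) a
      have hHbig : 2 ^ n + 1 ≤ H.card := by
        rw [hHcard]
        omega
      obtain ⟨G, hGH, hGUC, hGcard⟩ := exists_trim hHUC (2 ^ n + 1) hHbig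
      have hGOn : FamilyOn (n + 1) G := fun S hS => hHOn S (hGH hS)
      have hGdeg : ∀ e ∈ Finset.range (n + 1), degOf G e ≤ 2 ^ (n - 1) := fun e he =>
        haeq ▸ le_trans (degOf_mono hGH e) (hHdeg e he)
      have hpow2 : 2 ^ n = 2 * 2 ^ (n - 1) := by
        rw [← pow_succ']
        congr 1
        omega
      by_cases hsing : ∃ e, ({e} : Finset ℕ) ∈ G
      · -- a singleton forces degree > 2^(n-1)
        obtain ⟨e, he⟩ := hsing
        have h1 := singleton_degree hGUC he
        have he' : e ∈ Finset.range (n + 1) := hGOn {e} he (Finset.mem_singleton_self e)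
        have h2 : degOf G e ≤ 2 ^ (n - 1) := hGdeg e he'
        rw [hGcard] at h1
        omega
      · push_neg at hsing
        -- find an element of positive degree, remove a removable set of size ≥ 2
        have hGne : ∃ U ∈ G, U.Nonempty := by
          obtain ⟨S, hS, T, hT, hST⟩ := Finset.one_lt_card.1
            (show 1 < G.card by
              rw [hGcard]
              have : 0 < 2 ^ n := by positivity
              omega)
          rcases Finset.eq_empty_or_nonempty S with h | h
          · subst h
            exact ⟨T, hT, Finset.nonempty_iff_ne_empty.2 (fun hh => hST hh.symm)⟩
          · exact ⟨S, hS, h⟩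
        obtain ⟨U, hU, e₀, he₀⟩ := hGne
        have hdeg₀ : 1 ≤ degOf G e₀ := by
          unfold degOf
          rw [Nat.one_le_iff_ne_zero, ← Nat.pos_iff_ne_zero, Finset.card_pos]
          exact ⟨U, Finset.mem_filter.2 ⟨hU, he₀⟩⟩
        obtain ⟨v, hvG, hev, hUC₁⟩ := exists_removable hGUC hdeg₀
        have hv2 : 2 ≤ v.card := by
          have h1 : 1 ≤ v.card := Finset.card_pos.2 ⟨e₀, hev⟩
          rcases Nat.lt_or_ge v.card 2 with h | h
          · exfalso
            have h2 : v.card = 1 := by omega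
            obtain ⟨x, hx⟩ := Finset.card_eq_one.1 h2
            exact hsing x (hx ▸ hvG)
          · exact h
        have hG₁card : (G.erase v).card = 2 ^ n := by
          rw [Finset.card_erase_of_mem hvG, hGcard]
          omega
        set E₁ := (Finset.range (n + 1)).filter
          (fun x => x ∉ v ∧ degOf G x = 2 ^ (n - 1)) with hE₁
        have hvsub : v ⊆ Finset.range (n + 1) := hGOn v hvG
        have hE₁card : E₁.card ≤ n - 1 := by
          have h1 : E₁ ⊆ (Finset.range (n + 1)) \ v := by
            intro x hx
            rw [hE₁, Finset.mem_filter] at hx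
            rw [Finset.mem_sdiff]
            exact ⟨hx.1, hx.2.1⟩
          have h2 : ((Finset.range (n + 1)) \ v).card = (n + 1) - v.card := by
            rw [Finset.card_sdiff_of_subset hvsub, Finset.card_range]
          have h3 := Finset.card_le_card h1
          omega
        have hdegE₁ : ∀ x ∈ E₁, 1 ≤ degOf (G.erase v) x := by
          intro x hx
          rw [hE₁, Finset.mem_filter] at hx
          rw [degOf_erase_of_not_mem hx.2.1, hx.2.2]
          have : (0:ℕ) < 2 ^ (n - 1) := by positivity
          omega
        obtain ⟨G', hG'sub, hG'UC, hG'card, hG'deg⟩ := removal_loop E₁ (G.erase v) hUC₁ hdegE₁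
        set m' := G'.card with hm'
        have hm'le : m' ≤ 2 ^ n := by
          rw [hm', ← hG₁card]
          exact Finset.card_le_card hG'sub
        have hm'ge : 2 ^ n ≤ m' + (n - 1) := by
          rw [hG₁card] at hG'card
          omega
        have hnlt : n < 2 ^ n := n.lt_two_pow_self
        have hm'2 : 2 ≤ m' := by omega
        have hG'On : FamilyOn (n + 1) G' := fun S hS =>
          hGOn S (Finset.erase_subset v G (hG'sub hS))
        have hG'degall : ∀ e ∈ Finset.range (n + 1), degOf G' e ≤ 2 ^ (n - 1) - 1 := by
          intro e he
          have hGe : degOf G e ≤ 2 ^ (n - 1) := hGdeg e he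
          by_cases hev' : e ∈ v
          · have h1 : degOf G' e ≤ degOf (G.erase v) e := degOf_mono hG'sub e
            rw [degOf_erase_of_mem hvG hev'] at h1
            omega
          · by_cases heq2 : degOf G e = 2 ^ (n - 1)
            · have hxE : e ∈ E₁ := by
                rw [hE₁, Finset.mem_filter]
                exact ⟨he, hev', heq2⟩
              have h1 : degOf G' e < degOf (G.erase v) e := hG'deg e hxE
              rw [degOf_erase_of_not_mem hev'] at h1
              omega
            · have h1 : degOf G' e ≤ degOf (G.erase v) e := degOf_mono hG'sub e
              rw [degOf_erase_of_not_mem hev'] at h1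
              omega
        -- apply conj_g at (m', n)
        have hclogm' : Nat.clog 2 m' ≤ n := le_two_pow_iff_clog.1 hm'le
        have heq3 := hg m' n hm'2 hn hclogm'
        have hup : franklG (n + 1) m' ≤ 2 ^ (n - 1) - 1 := by
          calc franklG (n + 1) m' ≤ (Finset.range (n + 1)).sup (degOf G') :=
                franklG_le hG'UC hG'On rfl
            _ ≤ 2 ^ (n - 1) - 1 := Finset.sup_le hG'degall
        have hlow : 2 ^ (n - 1) ≤ franklG n m' := by
          obtain ⟨F', hF'UC, hF'On, hF'card, hF'sup⟩ := franklG_spec (n := n) (m := m') hm'le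
          set B' := ((Finset.range n).powerset) \ F' with hB'
          have hF'sub : F' ⊆ (Finset.range n).powerset := fun S hS =>
            Finset.mem_powerset.2 (hF'On S hS)
          have hB'card : B'.card = 2 ^ n - m' := by
            rw [hB', Finset.card_sdiff_of_subset hF'sub, Finset.card_powerset, Finset.card_range, hF'card]
          have hB'co : ∀ z ∈ B', ∀ x y : Finset ℕ, x ∪ y = z → x ∈ B' ∨ y ∈ B' := by
            intro z hz x y hxy
            rw [hB', Finset.mem_sdiff] at hz
            by_contra hcon
            push_neg at hcon
            have hzr : z ⊆ Finset.range n := Finset.mem_powerset.1 hz.1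
            have hxr : x ⊆ Finset.range n := (hxy ▸ Finset.subset_union_left :
              x ⊆ z).trans hzr
            have hyr : y ⊆ Finset.range n := (hxy ▸ Finset.subset_union_right :
              y ⊆ z).trans hzr
            have hx : x ∈ F' := by
              by_contra hxF
              exact absurd (Finset.mem_sdiff.2 ⟨Finset.mem_powerset.2 hxr, hxF⟩)
                (hB' ▸ hcon.1)
            have hy : y ∈ F' := by
              by_contra hyF
              exact absurd (Finset.mem_sdiff.2 ⟨Finset.mem_powerset.2 hyr, hyF⟩)
                (hB' ▸ hcon.2)
            exact hz.2 (hxy ▸ hF'UC x hx y hy)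
          have hcover := coUC_cover_card B' hB'co
          have hexists : ∃ e ∈ Finset.range n, e ∉ B'.biUnion id := by
            by_contra hcon
            push_neg at hcon
            have hsub2 : Finset.range n ⊆ B'.biUnion id := hcon
            have h5 := Finset.card_le_card hsub2
            rw [Finset.card_range] at h5
            omega
          obtain ⟨e, hen, hecov⟩ := hexists
          have hsubf : ((Finset.range n).powerset).filter (fun S => e ∈ S) ⊆
              F'.filter (fun S => e ∈ S) := by
            intro S hS
            rw [Finset.mem_filter] at hS ⊢
            refine ⟨?_, hS.2⟩
            by_contra hSF
            have hSB : S ∈ B' := by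
              rw [hB', Finset.mem_sdiff]
              exact ⟨hS.1, hSF⟩
            exact hecov (Finset.mem_biUnion.2 ⟨S, hSB, by simpa using hS.2⟩)
          have h10 : 2 ^ (n - 1) ≤ degOf ((Finset.range n).powerset) e := by
            apply powerset_degree (n := n)
            · intro S hS
              exact Finset.mem_powerset.1 hS
            · rw [Finset.card_powerset, Finset.card_range]
            · exact Finset.mem_range.1 hen
          have h11 : degOf ((Finset.range n).powerset) e ≤ degOf F' e :=
            Finset.card_le_card hsubf
          calc 2 ^ (n - 1) ≤ degOf F' e := le_trans h10 h11
            _ ≤ (Finset.range n).sup (degOf F') := Finset.le_sup hen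
            _ = franklG n m' := hF'sup
        rw [heq3] at hlow
        have hpows : (0:ℕ) < 2 ^ (n - 1) := by positivity
        omega
    · -- main case : m₀ + 1 ≤ 2^n
      have hm1 : m₀ + 1 ≤ 2 ^ n := hmid
      have hclogm : Nat.clog 2 (m₀ + 1) ≤ n := le_two_pow_iff_clog.1 hm1
      have heq := hg (m₀ + 1) n (by omega) hn hclogm
      obtain ⟨H, hHUC, hHOn, _, hHdeg, hHcard⟩ := franklF_spec (n + 1) a
      have hHbig : m₀ + 1 ≤ H.card := by rw [hHcard]; omega
      obtain ⟨G, hGH, hGUC, hGcard⟩ := exists_trim hHUC (m₀ + 1) hHbig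
      have hGOn : FamilyOn (n + 1) G := fun S hS => hHOn S (hGH hS)
      have h1 : franklG (n + 1) (m₀ + 1) ≤ a := by
        calc franklG (n + 1) (m₀ + 1) ≤ (Finset.range (n + 1)).sup (degOf G) :=
              franklG_le hGUC hGOn hGcard
          _ ≤ a := Finset.sup_le fun e he => le_trans (degOf_mono hGH e) (hHdeg e he)
      have h2 : franklG n (m₀ + 1) ≤ a := heq ▸ h1
      have h3 : m₀ + 1 ≤ franklF n a := (franklG_le_iff (by omega) hm1).1 h2
      omega
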